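/- Under the linear posterior performative drift with parameters a₁, a₂, a₃, a₄, the performative empirical risk PRₙ(h) = (1/n) Σᵢ (α₁ h(Xᵢ) + α₂ Yᵢ + α₃ Yᵢ h(Xᵢ) + α₄) computed from n i.i.d. samples (X₁,Y₁),…,(Xₙ,Yₙ) drawn from 𝒟 is an unbiased estimator of the performative risk: 𝔼[PRₙ(h)] = PR(h), where α₁ = (2 − a₁ − 2a₂ − a₃ − 2a₄)/4, α₂ = (a₃ − a₁)/4, α₃ = (−a₁ − a₃)/4, α₄ = (2 − a₁ − 2a₂ + a₃ + 2a₄)/4. -/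

import Mathlib

open MeasureTheory ProbabilityTheory Set

noncomputable section

/-- `μt` is the linear posterior performative drift of `μ` induced by the classifier `h`
with parameters `a1, a2, a3, a4`. -/
def IsLinearDrift {𝒳 : Type*} [MeasurableSpace 𝒳] (μ μt : Measure (𝒳 × ℝ)) (h : 𝒳 → ℝ)
    (a1 a2 a3 a4 : ℝ) : Prop :=
  μt {p : 𝒳 × ℝ | p.2 ≠ 1 ∧ p.2 ≠ -1} = 0 ∧
  (∀ A : Set 𝒳, MeasurableSet A →
    μt (A ×ˢ (Set.univ : Set ℝ)) = μ (A ×ˢ (Set.univ : Set ℝ))) ∧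
  (∀ A : Set 𝒳, MeasurableSet A → A ⊆ {x | h x = 1} →
    (μt (A ×ˢ ({1} : Set ℝ))).toReal
      = a1 * (μ (A ×ˢ ({1} : Set ℝ))).toReal
        + a2 * (μ (A ×ˢ (Set.univ : Set ℝ))).toReal) ∧
  (∀ A : Set 𝒳, MeasurableSet A → A ⊆ {x | h x = -1} →
    (μt (A ×ˢ ({1} : Set ℝ))).toReal
      = a3 * (μ (A ×ˢ ({1} : Set ℝ))).toReal
        + a4 * (μ (A ×ˢ (Set.univ : Set ℝ))).toReal)

/-- The performative risk `PR(h) = ℙ̃_h[h(X) ≠ Y]`. -/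
def PRisk {𝒳 : Type*} [MeasurableSpace 𝒳] (μt : Measure (𝒳 × ℝ)) (h : 𝒳 → ℝ) : ℝ :=
  (μt {p : 𝒳 × ℝ | h p.1 ≠ p.2}).toReal

/-- The performative empirical risk
`PRₙ(h) = (1/n) Σᵢ (α1 h(Xᵢ) + α2 Yᵢ + α3 Yᵢ h(Xᵢ) + α4)` computed from `n` i.i.d. samples
from `μ` is an unbiased estimator of the performative risk: `𝔼[PRₙ(h)] = PR(h)`. -/
theorem performative_empirical_risk_unbiased
    {𝒳 : Type*} [MeasurableSpace 𝒳]
    (μ μt : Measure (𝒳 × ℝ)) [IsProbabilityMeasure μ] [IsProbabilityMeasure μt]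
    (hμlab : μ {p : 𝒳 × ℝ | p.2 ≠ 1 ∧ p.2 ≠ -1} = 0)
    (h : 𝒳 → ℝ) (hmeas : Measurable h) (hval : ∀ x, h x = 1 ∨ h x = -1)
    (a1 a2 a3 a4 : ℝ)
    (ha2 : a2 ∈ Set.Icc (0 : ℝ) 1) (ha4 : a4 ∈ Set.Icc (0 : ℝ) 1)
    (ha1 : a1 ∈ Set.Icc (-a2) (1 - a2)) (ha3 : a3 ∈ Set.Icc (-a4) (1 - a4))
    (hdrift : IsLinearDrift μ μt h a1 a2 a3 a4)
    -- the coefficients of the performative empirical risk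
    (α1 α2 α3 α4 : ℝ)
    (hα1 : α1 = (2 - a1 - 2 * a2 - a3 - 2 * a4) / 4)
    (hα2 : α2 = (a3 - a1) / 4)
    (hα3 : α3 = (-a1 - a3) / 4)
    (hα4 : α4 = (2 - a1 - 2 * a2 + a3 + 2 * a4) / 4)
    -- the i.i.d. sample
    {Ω : Type*} [MeasurableSpace Ω] (P : Measure Ω) [IsProbabilityMeasure P]
    (n : ℕ) (hn : 0 < n) (Z : Fin n → Ω → 𝒳 × ℝ)
    (hZmeas : ∀ i, Measurable (Z i))
    (hiid : iIndepFun Z P)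
    (hdist : ∀ i, Measure.map (Z i) P = μ) :
    ∫ ω, (1 / n : ℝ) * ∑ i : Fin n,
        (α1 * h (Z i ω).1 + α2 * (Z i ω).2 + α3 * (Z i ω).2 * h (Z i ω).1 + α4) ∂P
      = PRisk μt h := by
  obtain ⟨hbad, hmarg, hpos, hneg⟩ := hdrift
  classical
  -- the clamped sign function
  set s : ℝ → ℝ := fun y => if y = 1 then 1 else if y = -1 then -1 else 0 with hs_def
  have smeas : Measurable s := by
    refine Measurable.ite measurableSet_eq measurable_const
      (Measurable.ite measurableSet_eq measurable_const measurable_const)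
  have hs1 : s 1 = 1 := by simp [hs_def]
  have hsm1 : s (-1) = -1 := by norm_num [hs_def]
  have hsb : ∀ y, |s y| ≤ 1 := by
    intro y; simp only [hs_def]; split_ifs <;> norm_num
  have hhb : ∀ x, |h x| ≤ 1 := by
    intro x; rcases hval x with hx | hx <;> rw [hx] <;> norm_num
  -- the bounded integrand
  set g : 𝒳 × ℝ → ℝ := fun p => α1 * h p.1 + α2 * s p.2 + α3 * s p.2 * h p.1 + α4 with hg_def
  have gmeas : Measurable g := by
    apply Measurable.add
    apply Measurable.add
    apply Measurable.add
    · exact (hmeas.comp measurable_fst).const_mul α1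
    · exact (smeas.comp measurable_snd).const_mul α2
    · exact ((smeas.comp measurable_snd).const_mul α3).mul (hmeas.comp measurable_fst)
    · exact measurable_const
  have gbound : ∀ p, ‖g p‖ ≤ |α1| + |α2| + |α3| + |α4| := by
    intro p
    have h1 : |α1 * h p.1| ≤ |α1| := by
      rw [abs_mul]; exact mul_le_of_le_one_right (abs_nonneg _) (hhb _)
    have h2 : |α2 * s p.2| ≤ |α2| := by
      rw [abs_mul]; exact mul_le_of_le_one_right (abs_nonneg _) (hsb _)
    have h3 : |α3 * s p.2 * h p.1| ≤ |α3| := by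
      rw [abs_mul, abs_mul]
      calc |α3| * |s p.2| * |h p.1| ≤ |α3| * 1 * 1 := by
            apply mul_le_mul (mul_le_mul le_rfl (hsb _) (abs_nonneg _) (abs_nonneg _))
              (hhb _) (abs_nonneg _) (by positivity)
        _ = |α3| := by ring
    have A := abs_add_le (α1 * h p.1) (α2 * s p.2)
    have B := abs_add_le (α1 * h p.1 + α2 * s p.2) (α3 * s p.2 * h p.1)
    have C := abs_add_le (α1 * h p.1 + α2 * s p.2 + α3 * s p.2 * h p.1) α4
    simp only [hg_def, Real.norm_eq_abs]
    linarith
  -- the bad set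
  set B : Set (𝒳 × ℝ) := {p : 𝒳 × ℝ | p.2 ≠ 1 ∧ p.2 ≠ -1} with hB_def
  have hBmeas : MeasurableSet B := by
    have hBeq : B = (Prod.snd ⁻¹' ({1, -1} : Set ℝ))ᶜ := by
      ext p; simp [hB_def, not_or]
    rw [hBeq]
    exact (measurable_snd ((measurableSet_singleton (-1:ℝ)).insert 1)).compl
  -- the four cells
  set A1 : Set 𝒳 := {x | h x = 1} with hA1_def
  set A3 : Set 𝒳 := {x | h x = -1} with hA3_def
  have hA1 : MeasurableSet A1 := hmeas (measurableSet_singleton 1)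
  have hA3 : MeasurableSet A3 := hmeas (measurableSet_singleton (-1))
  set S1 : Set (𝒳 × ℝ) := A1 ×ˢ ({1} : Set ℝ) with hS1_def
  set S2 : Set (𝒳 × ℝ) := A1 ×ˢ ({-1} : Set ℝ) with hS2_def
  set S3 : Set (𝒳 × ℝ) := A3 ×ˢ ({1} : Set ℝ) with hS3_def
  set S4 : Set (𝒳 × ℝ) := A3 ×ˢ ({-1} : Set ℝ) with hS4_def
  have hS1 : MeasurableSet S1 := hA1.prod (measurableSet_singleton _)
  have hS2 : MeasurableSet S2 := hA1.prod (measurableSet_singleton _)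
  have hS3 : MeasurableSet S3 := hA3.prod (measurableSet_singleton _)
  have hS4 : MeasurableSet S4 := hA3.prod (measurableSet_singleton _)
  set m1 : ℝ := (μ S1).toReal with hm1_def
  set m2 : ℝ := (μ S2).toReal with hm2_def
  set m3 : ℝ := (μ S3).toReal with hm3_def
  set m4 : ℝ := (μ S4).toReal with hm4_def
  -- the coefficients
  set c1 : ℝ := α1 + α2 + α3 + α4 with hc1_def
  set c2 : ℝ := α1 - α2 - α3 + α4 with hc2_def
  set c3 : ℝ := -α1 + α2 - α3 + α4 with hc3_def
  set c4 : ℝ := -α1 - α2 + α3 + α4 with hc4_def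
  -- g equals a simple function off B
  set F : 𝒳 × ℝ → ℝ := fun p => S1.indicator (fun _ => c1) p + S2.indicator (fun _ => c2) p
      + S3.indicator (fun _ => c3) p + S4.indicator (fun _ => c4) p with hF_def
  have mS1 : ∀ q : 𝒳 × ℝ, q ∈ S1 ↔ h q.1 = 1 ∧ q.2 = 1 := by
    intro q; rw [hS1_def, Set.mem_prod]; simp [hA1_def]
  have mS2 : ∀ q : 𝒳 × ℝ, q ∈ S2 ↔ h q.1 = 1 ∧ q.2 = -1 := by
    intro q; rw [hS2_def, Set.mem_prod]; simp [hA1_def]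
  have mS3 : ∀ q : 𝒳 × ℝ, q ∈ S3 ↔ h q.1 = -1 ∧ q.2 = 1 := by
    intro q; rw [hS3_def, Set.mem_prod]; simp [hA3_def]
  have mS4 : ∀ q : 𝒳 × ℝ, q ∈ S4 ↔ h q.1 = -1 ∧ q.2 = -1 := by
    intro q; rw [hS4_def, Set.mem_prod]; simp [hA3_def]
  have hgF : ∀ p ∉ B, g p = F p := by
    intro p hp
    simp only [hB_def, Set.mem_setOf_eq, not_and_or, not_ne_iff] at hp
    rcases hval p.1 with hx | hx <;> rcases hp with hy | hy
    · simp only [hF_def]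
      rw [
        Set.indicator_of_mem ((mS1 p).mpr ⟨hx, hy⟩),
        Set.indicator_of_notMem (fun hq => by
          have := ((mS2 p).mp hq).2; rw [hy] at this; norm_num at this),
        Set.indicator_of_notMem (fun hq => by
          have := ((mS3 p).mp hq).1; rw [hx] at this; norm_num at this),
        Set.indicator_of_notMem (fun hq => by
          have := ((mS4 p).mp hq).1; rw [hx] at this; norm_num at this)]
      simp only [hg_def, hx, hy, hs1, hsm1, hc1_def, hc2_def, hc3_def, hc4_def, add_zero, zero_add]
      ring
    · simp only [hF_def]
      rw [
        Set.indicator_of_notMem (fun hq => by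
          have := ((mS1 p).mp hq).2; rw [hy] at this; norm_num at this),
        Set.indicator_of_mem ((mS2 p).mpr ⟨hx, hy⟩),
        Set.indicator_of_notMem (fun hq => by
          have := ((mS3 p).mp hq).1; rw [hx] at this; norm_num at this),
        Set.indicator_of_notMem (fun hq => by
          have := ((mS4 p).mp hq).1; rw [hx] at this; norm_num at this)]
      simp only [hg_def, hx, hy, hs1, hsm1, hc1_def, hc2_def, hc3_def, hc4_def, add_zero, zero_add]
      ring
    · simp only [hF_def]
      rw [
        Set.indicator_of_notMem (fun hq => by
          have := ((mS1 p).mp hq).1; rw [hx] at this; norm_num at this),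
        Set.indicator_of_notMem (fun hq => by
          have := ((mS2 p).mp hq).1; rw [hx] at this; norm_num at this),
        Set.indicator_of_mem ((mS3 p).mpr ⟨hx, hy⟩),
        Set.indicator_of_notMem (fun hq => by
          have := ((mS4 p).mp hq).2; rw [hy] at this; norm_num at this)]
      simp only [hg_def, hx, hy, hs1, hsm1, hc1_def, hc2_def, hc3_def, hc4_def, add_zero, zero_add]
      ring
    · simp only [hF_def]
      rw [
        Set.indicator_of_notMem (fun hq => by
          have := ((mS1 p).mp hq).1; rw [hx] at this; norm_num at this),
        Set.indicator_of_notMem (fun hq => by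
          have := ((mS2 p).mp hq).1; rw [hx] at this; norm_num at this),
        Set.indicator_of_notMem (fun hq => by
          have := ((mS3 p).mp hq).2; rw [hy] at this; norm_num at this),
        Set.indicator_of_mem ((mS4 p).mpr ⟨hx, hy⟩)]
      simp only [hg_def, hx, hy, hs1, hsm1, hc1_def, hc2_def, hc3_def, hc4_def, add_zero, zero_add]
      ring
  have hgFae : g =ᵐ[μ] F := by
    have : ∀ᵐ p ∂μ, g p = F p := by
      rw [MeasureTheory.ae_iff]
      exact measure_mono_null (fun p hp => by
        by_contra hB'
        exact hp (hgF p hB')) hμlab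
    exact this
  -- the integral of g over μ
  have hFint : ∫ p, F p ∂μ = m1 * c1 + m2 * c2 + m3 * c3 + m4 * c4 := by
    have i1 : Integrable (S1.indicator (fun _ => c1)) μ := (integrable_const c1).indicator hS1
    have i2 : Integrable (S2.indicator (fun _ => c2)) μ := (integrable_const c2).indicator hS2
    have i3 : Integrable (S3.indicator (fun _ => c3)) μ := (integrable_const c3).indicator hS3
    have i4 : Integrable (S4.indicator (fun _ => c4)) μ := (integrable_const c4).indicator hS4
    simp only [hF_def]
    rw [integral_add (by exact (i1.add i2).add i3) i4]
    rw [integral_add (by exact i1.add i2) i3]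
    rw [integral_add i1 i2]
    rw [integral_indicator_const c1 hS1, integral_indicator_const c2 hS2,
      integral_indicator_const c3 hS3, integral_indicator_const c4 hS4]
    simp [hm1_def, hm2_def, hm3_def, hm4_def, smul_eq_mul, measureReal_def]
  have hgint : ∫ p, g p ∂μ = m1 * c1 + m2 * c2 + m3 * c3 + m4 * c4 := by
    rw [integral_congr_ae hgFae]; exact hFint
  -- pass from the expectation to ∫ g dμ
  have hZae : ∀ᵐ ω ∂P, ∀ i, (Z i ω).2 = 1 ∨ (Z i ω).2 = -1 := by
    rw [MeasureTheory.ae_all_iff]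
    intro i
    rw [MeasureTheory.ae_iff]
    have hset : {ω | ¬((Z i ω).2 = 1 ∨ (Z i ω).2 = -1)} = Z i ⁻¹' B := by
      ext ω; simp [hB_def, not_or]
    rw [hset, ← Measure.map_apply (hZmeas i) hBmeas, hdist i]
    exact hμlab
  have hcong : ∫ ω, (1 / n : ℝ) * ∑ i : Fin n,
      (α1 * h (Z i ω).1 + α2 * (Z i ω).2 + α3 * (Z i ω).2 * h (Z i ω).1 + α4) ∂P
      = ∫ ω, (1 / n : ℝ) * ∑ i : Fin n, g (Z i ω) ∂P := by
    apply integral_congr_ae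
    filter_upwards [hZae] with ω hω
    congr 1
    apply Finset.sum_congr rfl
    intro i _
    have : s (Z i ω).2 = (Z i ω).2 := by
      rcases hω i with hy | hy <;> rw [hy] <;> simp [hs1, hsm1]
    simp [hg_def, this]
  have hint_i : ∀ i : Fin n, Integrable (fun ω => g (Z i ω)) P := by
    intro i
    refine Integrable.mono' (integrable_const (|α1| + |α2| + |α3| + |α4|))
      ((gmeas.comp (hZmeas i)).aestronglyMeasurable) ?_
    exact Filter.Eventually.of_forall fun ω => gbound _
  have hmap : ∀ i : Fin n, ∫ ω, g (Z i ω) ∂P = ∫ p, g p ∂μ := by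
    intro i
    rw [← hdist i, integral_map (hZmeas i).aemeasurable]
    rw [hdist i]
    exact gmeas.aestronglyMeasurable
  have hexp : ∫ ω, (1 / n : ℝ) * ∑ i : Fin n, g (Z i ω) ∂P
      = m1 * c1 + m2 * c2 + m3 * c3 + m4 * c4 := by
    rw [integral_const_mul, integral_finset_sum _ (fun i _ => hint_i i)]
    have : ∀ i ∈ Finset.univ, ∫ ω, g (Z i ω) ∂P = m1 * c1 + m2 * c2 + m3 * c3 + m4 * c4 := by
      intro i _; rw [hmap i, hgint]
    rw [Finset.sum_congr rfl this, Finset.sum_const, Finset.card_univ, Fintype.card_fin,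
      nsmul_eq_mul]
    have hn0 : (n : ℝ) ≠ 0 := Nat.cast_ne_zero.mpr hn.ne'
    field_simp
  -- measure arithmetic in ℝ≥0∞ and transfer to ℝ
  have hne : ∀ (ν : Measure (𝒳 × ℝ)) [IsProbabilityMeasure ν] (T : Set (𝒳 × ℝ)), ν T ≠ ⊤ :=
    fun ν _ T => measure_ne_top ν T
  have hdisj12 : Disjoint S1 S2 := by
    rw [Set.disjoint_left]
    rintro p ⟨_, hp2⟩ ⟨_, hq2⟩
    simp only [Set.mem_singleton_iff] at hp2 hq2
    rw [hp2] at hq2; norm_num at hq2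
  have hdisj34 : Disjoint S3 S4 := by
    rw [Set.disjoint_left]
    rintro p ⟨_, hp2⟩ ⟨_, hq2⟩
    simp only [Set.mem_singleton_iff] at hp2 hq2
    rw [hp2] at hq2; norm_num at hq2
  have hdisj23 : Disjoint S2 S3 := by
    rw [Set.disjoint_left]
    rintro p ⟨hp1, _⟩ ⟨hq1, _⟩
    simp only [hA1_def, hA3_def, Set.mem_setOf_eq] at hp1 hq1
    rw [hp1] at hq1; norm_num at hq1
  -- μ(A1 × univ) = μ S1 + μ S2, etc.
  have split_univ : ∀ (ν : Measure (𝒳 × ℝ)), ν B = 0 → ∀ (A : Set 𝒳) (T U : Set (𝒳 × ℝ)),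
      T = A ×ˢ ({1} : Set ℝ) → U = A ×ˢ ({-1} : Set ℝ) → Disjoint T U → MeasurableSet U →
      ν (A ×ˢ (Set.univ : Set ℝ)) = ν T + ν U := by
    intro ν hνB A T U hT hU hdisj hUmeas
    have hsub : A ×ˢ (Set.univ : Set ℝ) ⊆ (T ∪ U) ∪ B := by
      intro p ⟨hp1, _⟩
      by_cases hy1 : p.2 = 1
      · exact Or.inl (Or.inl (by rw [hT]; exact ⟨hp1, hy1⟩))
      · by_cases hy2 : p.2 = -1
        · exact Or.inl (Or.inr (by rw [hU]; exact ⟨hp1, hy2⟩))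
        · exact Or.inr ⟨hy1, hy2⟩
    have hsup : T ∪ U ⊆ A ×ˢ (Set.univ : Set ℝ) := by
      rintro p (hp | hp)
      · rw [hT] at hp; exact ⟨hp.1, trivial⟩
      · rw [hU] at hp; exact ⟨hp.1, trivial⟩
    have h1 : ν (A ×ˢ (Set.univ : Set ℝ)) ≤ ν (T ∪ U) := by
      calc ν (A ×ˢ (Set.univ : Set ℝ)) ≤ ν ((T ∪ U) ∪ B) := measure_mono hsub
        _ ≤ ν (T ∪ U) + ν B := measure_union_le _ _
        _ = ν (T ∪ U) := by rw [hνB, add_zero]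
    have h2 : ν (T ∪ U) ≤ ν (A ×ˢ (Set.univ : Set ℝ)) := measure_mono hsup
    rw [← measure_union hdisj hUmeas]
    exact le_antisymm h1 h2
  have hμB : μ B = 0 := hμlab
  have hμtB : μt B = 0 := hbad
  have hμ1univ : (μ (A1 ×ˢ (Set.univ : Set ℝ))).toReal = m1 + m2 := by
    rw [split_univ μ hμB A1 S1 S2 hS1_def hS2_def hdisj12 hS2,
      ENNReal.toReal_add (hne μ S1) (hne μ S2)]
  have hμ3univ : (μ (A3 ×ˢ (Set.univ : Set ℝ))).toReal = m3 + m4 := by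
    rw [split_univ μ hμB A3 S3 S4 hS3_def hS4_def hdisj34 hS4,
      ENNReal.toReal_add (hne μ S3) (hne μ S4)]
  -- drift conditions
  have ht1 : (μt S1).toReal = a1 * m1 + a2 * (m1 + m2) := by
    have := hpos A1 hA1 (fun x hx => hx)
    rw [← hS1_def, ← hm1_def, hμ1univ] at this
    exact this
  have ht3 : (μt S3).toReal = a3 * m3 + a4 * (m3 + m4) := by
    have := hneg A3 hA3 (fun x hx => hx)
    rw [← hS3_def, ← hm3_def, hμ3univ] at this
    exact this
  have ht2 : (μt S2).toReal = (m1 + m2) - (a1 * m1 + a2 * (m1 + m2)) := by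
    have hsplit := split_univ μt hμtB A1 S1 S2 hS1_def hS2_def hdisj12 hS2
    rw [hmarg A1 hA1] at hsplit
    have : (μ (A1 ×ˢ (Set.univ : Set ℝ))).toReal = (μt S1).toReal + (μt S2).toReal := by
      rw [hsplit, ENNReal.toReal_add (hne μt S1) (hne μt S2)]
    rw [hμ1univ, ht1] at this
    linarith
  -- PRisk = μt S2 + μt S3
  have hPR : PRisk μt h = (μt S2).toReal + (μt S3).toReal := by
    have hsub : {p : 𝒳 × ℝ | h p.1 ≠ p.2} ⊆ (S2 ∪ S3) ∪ B := by
      intro p hp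
      simp only [Set.mem_setOf_eq] at hp
      by_cases hy1 : p.2 = 1
      · rcases hval p.1 with hx | hx
        · exact absurd (hx.trans hy1.symm) hp
        · exact Or.inl (Or.inr ⟨hx, hy1⟩)
      · by_cases hy2 : p.2 = -1
        · rcases hval p.1 with hx | hx
          · exact Or.inl (Or.inl ⟨hx, hy2⟩)
          · exact absurd (hx.trans hy2.symm) hp
        · exact Or.inr ⟨hy1, hy2⟩
    have hsup : S2 ∪ S3 ⊆ {p : 𝒳 × ℝ | h p.1 ≠ p.2} := by
      rintro p (⟨hp1, hp2⟩ | ⟨hp1, hp2⟩)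
      · simp only [hA1_def, Set.mem_setOf_eq] at hp1
        simp only [Set.mem_singleton_iff] at hp2
        simp only [Set.mem_setOf_eq, hp1, hp2]; norm_num
      · simp only [hA3_def, Set.mem_setOf_eq] at hp1
        simp only [Set.mem_singleton_iff] at hp2
        simp only [Set.mem_setOf_eq, hp1, hp2]; norm_num
    have heq : μt {p : 𝒳 × ℝ | h p.1 ≠ p.2} = μt (S2 ∪ S3) := by
      apply le_antisymm
      · calc μt {p : 𝒳 × ℝ | h p.1 ≠ p.2} ≤ μt ((S2 ∪ S3) ∪ B) := measure_mono hsub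
          _ ≤ μt (S2 ∪ S3) + μt B := measure_union_le _ _
          _ = μt (S2 ∪ S3) := by rw [hμtB, add_zero]
      · exact measure_mono hsup
    rw [PRisk, heq, measure_union hdisj23 hS3,
      ENNReal.toReal_add (hne μt S2) (hne μt S3)]
  -- conclude
  rw [hcong, hexp, hPR, ht2, ht3]
  rw [hc1_def, hc2_def, hc3_def, hc4_def, hα1, hα2, hα3, hα4]
  ring

end
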